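/- (Correctness of rMetaBoost.) Let ε ∈ (0,1) and T ≥ 8·log(2/ε). Assume that for every t ∈ {1,…,T}: (i) er_{D_{μ_t}}(h_t) ≤ 1/16, and (ii) if b_{t+1} = 0 then P_{x∼D}[N_{t+1}(x) = c_t + 1] ≤ ε/8. Then the final hypothesis H = sign(∑_{t=1}^T h_t) satisfies er_D(H) ≤ ε. -/

import Mathlib

open MeasureTheory Finset

/-- Correctness of rMetaBoost: if `T ≥ 8·log(2/ε)`, every `h_t` has error at most `1/16`
under `D_{μ_t}`, and whenever `b_{t+1} = 0` the capped mass satisfies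
`P_{x∼D}[N_{t+1}(x) = c_t+1] ≤ ε/8`, then the majority vote `H = sign(∑_t h_t)`
satisfies `er_D(H) ≤ ε`. -/
theorem rMetaBoost_correct
    {X : Type*} [MeasurableSpace X]
    (D : Measure X) [IsProbabilityMeasure D]
    (f : X → ℝ) (hfm : Measurable f) (hfpm : ∀ x, f x = -1 ∨ f x = 1)
    (T : ℕ) (hT : 0 < T)
    (h : ℕ → X → ℝ) (hhm : ∀ t, Measurable (h t)) (hhpm : ∀ t x, h t x = -1 ∨ h t x = 1)
    (b : ℕ → ℝ) (hb : ∀ t, b t = 0 ∨ b t = 1)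
    (c : ℕ → ℝ) (N M : ℕ → X → ℝ)
    (hc1 : c 1 = 0) (hN1 : ∀ x, N 1 x = 0) (hM1 : ∀ x, M 1 x = 0)
    (hcrec : ∀ t, 1 ≤ t → t ≤ T → c (t + 1) = c t + b (t + 1))
    (hNrec : ∀ t, 1 ≤ t → t ≤ T → ∀ x,
      N (t + 1) x = M t x + if h t x ≠ f x then 1 else 0)
    (hMrec : ∀ t, 1 ≤ t → t ≤ T → ∀ x, M (t + 1) x = min (N (t + 1) x) (c (t + 1)))
    (Dμ : ℕ → Measure X)
    (hDμ : ∀ t, Dμ t = D.withDensity fun x =>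
      ENNReal.ofReal (Real.exp (M t x - c t) / ∫ y, Real.exp (M t y - c t) ∂D))
    (ε : ℝ) (hε : ε ∈ Set.Ioo (0 : ℝ) 1) (hTε : 8 * Real.log (2 / ε) ≤ (T : ℝ))
    (her : ∀ t, 1 ≤ t → t ≤ T → Dμ t {x | h t x ≠ f x} ≤ ENNReal.ofReal (1 / 16))
    (hthr : ∀ t, 1 ≤ t → t ≤ T → b (t + 1) = 0 →
      D {x | N (t + 1) x = c t + 1} ≤ ENNReal.ofReal (ε / 8))
    (H : X → ℝ)
    (hH : ∀ x, H x = if 0 < ∑ t ∈ Finset.Icc 1 T, h t x then 1 else -1) :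
    D {x | H x ≠ f x} ≤ ENNReal.ofReal ε := by
  classical
  obtain ⟨hε0, hε1⟩ := hε
  have hexp1 : (1:ℝ) ≤ Real.exp 1 := Real.one_le_exp (by norm_num)
  have hexp3 : Real.exp 1 ≤ 3 := le_of_lt (lt_trans Real.exp_one_lt_d9 (by norm_num))
  -- error sets measurable
  have hEmeas : ∀ t, MeasurableSet {x | h t x ≠ f x} := by
    intro t
    have h1 : MeasurableSet {x | h t x = f x} := measurableSet_eq_fun (hhm t) hfm
    simpa [Set.compl_setOf] using h1.compl
  have hemeas : ∀ t, Measurable (fun x => if h t x ≠ f x then (1:ℝ) else 0) := fun t =>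
    Measurable.ite (hEmeas t) measurable_const measurable_const
  -- main invariant
  have inv : ∀ t, 1 ≤ t → t ≤ T + 1 →
      Measurable (M t) ∧ (∃ k : ℕ, c t = (k : ℝ)) ∧
        (∀ x, ∃ n : ℕ, M t x = (n : ℝ)) ∧ (∀ x, 0 ≤ M t x) ∧ (∀ x, M t x ≤ c t) := by
    intro t ht
    induction t, ht using Nat.le_induction with
    | base =>
      intro _
      have hMconst : M 1 = fun _ => (0:ℝ) := funext hM1
      exact ⟨by rw [hMconst]; exact measurable_const, ⟨0, by simp [hc1]⟩,
        fun x => ⟨0, by simp [hM1 x]⟩, fun x => by simp [hM1 x], fun x => by simp [hM1 x, hc1]⟩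
    | succ t ht ih =>
      intro hT1
      have htT : t ≤ T := by omega
      obtain ⟨hMm, ⟨k, hk⟩, hNat, hM0, hMc⟩ := ih (by omega)
      have hMdef : ∀ x, M (t+1) x
          = min (M t x + (if h t x ≠ f x then (1:ℝ) else 0)) (c t + b (t+1)) := fun x => by
        rw [hMrec t ht htT x, hNrec t ht htT x, hcrec t ht htT]
      have hbnn : 0 ≤ b (t+1) := by rcases hb (t+1) with h'|h' <;> simp [h']
      refine ⟨?_, ?_, ?_, ?_, ?_⟩
      · have hfun : M (t+1) = fun x =>
            min (M t x + (if h t x ≠ f x then (1:ℝ) else 0)) (c t + b (t+1)) := funext hMdef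
        rw [hfun]
        exact (hMm.add (hemeas t)).min measurable_const
      · rcases hb (t+1) with h'|h'
        · exact ⟨k, by rw [hcrec t ht htT, hk, h', add_zero]⟩
        · exact ⟨k+1, by rw [hcrec t ht htT, hk, h']; push_cast; ring⟩
      · intro x
        obtain ⟨n, hn⟩ := hNat x
        rcases hb (t+1) with h'|h' <;> by_cases hx : h t x ≠ f x
        · exact ⟨min (n+1) k, by rw [hMdef x, hn, hk, h', if_pos hx]; push_cast; norm_num⟩
        · exact ⟨min n k, by rw [hMdef x, hn, hk, h', if_neg hx]; push_cast; norm_num⟩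
        · exact ⟨min (n+1) (k+1), by rw [hMdef x, hn, hk, h', if_pos hx]; push_cast; norm_num⟩
        · exact ⟨min n (k+1), by rw [hMdef x, hn, hk, h', if_neg hx]; push_cast; norm_num⟩
      · intro x
        rw [hMdef x]
        refine le_min (add_nonneg (hM0 x) ?_) (add_nonneg ?_ hbnn)
        · by_cases hx : h t x ≠ f x <;> simp [hx]
        · rw [hk]; positivity
      · intro x
        rw [hMdef x, hcrec t ht htT]
        exact min_le_right _ _
  -- weight function facts
  have hwmeas : ∀ t, 1 ≤ t → t ≤ T + 1 → Measurable fun x => Real.exp (M t x - c t) :=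
    fun t h1 h2 => Real.measurable_exp.comp ((inv t h1 h2).1.sub measurable_const)
  have hwint : ∀ t, 1 ≤ t → t ≤ T + 1 → Integrable (fun x => Real.exp (M t x - c t)) D := by
    intro t h1 h2
    refine (integrable_const (1:ℝ)).mono' (hwmeas t h1 h2).aestronglyMeasurable
      (ae_of_all _ fun x => ?_)
    rw [Real.norm_eq_abs, abs_of_pos (Real.exp_pos _)]
    calc Real.exp (M t x - c t) ≤ Real.exp 0 :=
          Real.exp_le_exp.mpr (by linarith [(inv t h1 h2).2.2.2.2 x])
      _ = 1 := Real.exp_zero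
  have hIpos : ∀ t, 1 ≤ t → t ≤ T + 1 → 0 < ∫ y, Real.exp (M t y - c t) ∂D := by
    intro t h1 h2
    have hlb : ∀ y, Real.exp (-c t) ≤ Real.exp (M t y - c t) := fun y =>
      Real.exp_le_exp.mpr (by linarith [(inv t h1 h2).2.2.2.1 y])
    have hmono := integral_mono (integrable_const _) (hwint t h1 h2) hlb
    rw [integral_const] at hmono
    simp only [measureReal_def, measure_univ, ENNReal.toReal_one, one_smul] at hmono
    exact lt_of_lt_of_le (Real.exp_pos _) hmono
  -- weak learning in integral form
  have herr : ∀ t, 1 ≤ t → t ≤ T →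
      ∫ x in {x | h t x ≠ f x}, Real.exp (M t x - c t) ∂D
        ≤ (∫ y, Real.exp (M t y - c t) ∂D) / 16 := by
    intro t h1 h2
    have hItpos := hIpos t h1 (by omega)
    set It := ∫ y, Real.exp (M t y - c t) ∂D with hIt
    have h0 := her t h1 h2
    rw [hDμ t, withDensity_apply _ (hEmeas t)] at h0
    rw [← hIt] at h0
    have hrw : (fun x => ENNReal.ofReal (Real.exp (M t x - c t) / It)) =
        fun x => ENNReal.ofReal It⁻¹ * ENNReal.ofReal (Real.exp (M t x - c t)) := by
      funext x
      rw [div_eq_inv_mul, ENNReal.ofReal_mul (by positivity)]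
    rw [hrw, lintegral_const_mul' _ _ ENNReal.ofReal_ne_top] at h0
    have h1' := mul_le_mul_right h0 (ENNReal.ofReal It)
    rw [← mul_assoc, ← ENNReal.ofReal_mul hItpos.le, mul_inv_cancel₀ hItpos.ne',
      ENNReal.ofReal_one, one_mul, ← ENNReal.ofReal_mul hItpos.le] at h1'
    have heq : ENNReal.ofReal (∫ x in {x | h t x ≠ f x}, Real.exp (M t x - c t) ∂D)
        = ∫⁻ x in {x | h t x ≠ f x}, ENNReal.ofReal (Real.exp (M t x - c t)) ∂D :=
      ofReal_integral_eq_lintegral_ofReal ((hwint t h1 (by omega)).restrict)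
        (ae_of_all _ fun x => (Real.exp_pos _).le)
    rw [← heq] at h1'
    have hfin := (ENNReal.ofReal_le_ofReal_iff (by positivity)).mp h1'
    linarith [hfin]
  -- one-step potential decrease
  have hstep : ∀ t, 1 ≤ t → t ≤ T →
      ∫ y, Real.exp (M (t+1) y - c (t+1)) ∂D ≤
        Real.exp (-(b (t+1))) * ((1 + (Real.exp 1 - 1)/16) * ∫ y, Real.exp (M t y - c t) ∂D) := by
    intro t h1 h2
    have hpt : ∀ x, Real.exp (M (t+1) x - c (t+1)) ≤
        Real.exp (-(b (t+1))) * (Real.exp (M t x - c t) +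
          (Real.exp 1 - 1) * Set.indicator {x | h t x ≠ f x}
            (fun x => Real.exp (M t x - c t)) x) := by
      intro x
      have hMle : M (t+1) x ≤ M t x + (if h t x ≠ f x then (1:ℝ) else 0) := by
        rw [hMrec t h1 h2 x, hNrec t h1 h2 x]; exact min_le_left _ _
      have hcc : c (t+1) = c t + b (t+1) := hcrec t h1 h2
      have h3 : Real.exp (M (t+1) x - c (t+1)) ≤
          Real.exp (-(b (t+1))) * (Real.exp (M t x - c t) *
            Real.exp (if h t x ≠ f x then (1:ℝ) else 0)) := by
        rw [← Real.exp_add, ← Real.exp_add]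
        apply Real.exp_le_exp.mpr
        rw [hcc]
        linarith [hMle]
      refine h3.trans (le_of_eq ?_)
      congr 1
      by_cases hx : h t x ≠ f x
      · rw [Set.indicator_of_mem (show x ∈ {x | h t x ≠ f x} from hx), if_pos hx]
        ring
      · rw [Set.indicator_of_notMem (show x ∉ {x | h t x ≠ f x} from hx), if_neg hx,
          Real.exp_zero]
        ring
    have hint1 := hwint t h1 (by omega)
    have hindint : Integrable (fun x => (Real.exp 1 - 1) *
        Set.indicator {x | h t x ≠ f x} (fun x => Real.exp (M t x - c t)) x) D :=
      (hint1.indicator (hEmeas t)).const_mul _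
    have hint2 : Integrable (fun x => Real.exp (-(b (t+1))) * (Real.exp (M t x - c t) +
        (Real.exp 1 - 1) * Set.indicator {x | h t x ≠ f x}
          (fun x => Real.exp (M t x - c t)) x)) D :=
      (hint1.add hindint).const_mul _
    have hmono := integral_mono (hwint (t+1) (by omega) (by omega)) hint2 hpt
    rw [integral_const_mul, integral_add hint1 hindint, integral_const_mul,
      integral_indicator (hEmeas t)] at hmono
    refine hmono.trans ?_
    have h16 := herr t h1 h2
    have he1 : (0:ℝ) ≤ Real.exp 1 - 1 := by linarith
    refine mul_le_mul_of_nonneg_left ?_ (Real.exp_pos _).le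
    nlinarith [mul_le_mul_of_nonneg_left h16 he1]
  -- accumulated potential bound
  have haccum : ∀ t, 1 ≤ t → t ≤ T + 1 →
      ∫ y, Real.exp (M t y - c t) ∂D ≤
        Real.exp (-(c t)) * (1 + (Real.exp 1 - 1)/16)^(t-1) := by
    intro t ht
    induction t, ht using Nat.le_induction with
    | base =>
      intro _
      have hfun : (fun y => Real.exp (M 1 y - c 1)) = fun _ => (1:ℝ) := by
        funext y; simp [hM1 y, hc1]
      rw [hfun, integral_const]
      simp [hc1]
    | succ t ht ih =>
      intro h2
      have h2' : t ≤ T := by omega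
      have hq : (0:ℝ) < 1 + (Real.exp 1 - 1)/16 := by linarith
      have hstept := hstep t ht h2'
      have ihh := ih (by omega)
      calc ∫ y, Real.exp (M (t+1) y - c (t+1)) ∂D
          ≤ Real.exp (-(b (t+1))) * ((1 + (Real.exp 1 - 1)/16) *
              ∫ y, Real.exp (M t y - c t) ∂D) := hstept
        _ ≤ Real.exp (-(b (t+1))) * ((1 + (Real.exp 1 - 1)/16) *
              (Real.exp (-(c t)) * (1 + (Real.exp 1 - 1)/16)^(t-1))) := by
            exact mul_le_mul_of_nonneg_left
              (mul_le_mul_of_nonneg_left ihh hq.le) (Real.exp_pos _).le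
        _ = Real.exp (-(c (t+1))) * (1 + (Real.exp 1 - 1)/16)^((t+1)-1) := by
            rw [hcrec t ht h2', neg_add, Real.exp_add]
            have hts : (t+1)-1 = (t-1)+1 := by omega
            rw [hts, pow_succ]
            ring
  -- Markov bound for the "high capped count" set
  have hS1m : MeasurableSet {x | (T:ℝ)/4 ≤ M (T+1) x} :=
    measurableSet_le measurable_const (inv (T+1) (by omega) le_rfl).1
  have hS1 : (D {x | (T:ℝ)/4 ≤ M (T+1) x}).toReal ≤ ε/2 := by
    have hconst : ∀ x ∈ {x | (T:ℝ)/4 ≤ M (T+1) x},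
        Real.exp ((T:ℝ)/4 - c (T+1)) ≤ Real.exp (M (T+1) x - c (T+1)) := fun x hx =>
      Real.exp_le_exp.mpr (by have hxx : (T:ℝ)/4 ≤ M (T+1) x := hx; linarith)
    have hm := setIntegral_ge_of_const_le (s := {x | (T:ℝ)/4 ≤ M (T+1) x})
      hS1m (measure_ne_top D _) hconst ((hwint (T+1) (by omega) le_rfl).integrableOn)
    have hle := setIntegral_le_integral (s := {x | (T:ℝ)/4 ≤ M (T+1) x})
      (hwint (T+1) (by omega) le_rfl) (ae_of_all _ fun x => (Real.exp_pos _).le)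
    have hup := haccum (T+1) (by omega) le_rfl
    have hts : (T+1)-1 = T := by omega
    rw [hts] at hup
    have h5 : Real.exp ((T:ℝ)/4 - c (T+1)) * (D {x | (T:ℝ)/4 ≤ M (T+1) x}).toReal ≤
        Real.exp (-(c (T+1))) * (1 + (Real.exp 1 - 1)/16)^T := by
      rw [smul_eq_mul, measureReal_def] at hm; linarith [hm, hle, hup]
    have hA : (0:ℝ) < Real.exp ((T:ℝ)/4 - c (T+1)) := Real.exp_pos _
    have h6 : (D {x | (T:ℝ)/4 ≤ M (T+1) x}).toReal ≤
        Real.exp (-(c (T+1))) * (1 + (Real.exp 1 - 1)/16)^T / Real.exp ((T:ℝ)/4 - c (T+1)) := by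
      rw [le_div_iff₀ hA]; linarith [h5]
    have h7 : Real.exp (-(c (T+1))) * (1 + (Real.exp 1 - 1)/16)^T /
        Real.exp ((T:ℝ)/4 - c (T+1)) =
        Real.exp (-((T:ℝ)/4)) * (1 + (Real.exp 1 - 1)/16)^T := by
      rw [mul_comm (Real.exp (-(c (T+1)))) _, mul_div_assoc, ← Real.exp_sub]
      rw [show -(c (T+1)) - ((T:ℝ)/4 - c (T+1)) = -((T:ℝ)/4) by ring]
      ring
    rw [h7] at h6
    have hqpow : (1 + (Real.exp 1 - 1)/16)^T ≤ Real.exp ((T:ℝ) * (1/8)) := by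
      rw [Real.exp_nat_mul]
      refine pow_le_pow_left₀ (by linarith) ?_ T
      calc 1 + (Real.exp 1 - 1)/16 ≤ 1 + (1/8 : ℝ) := by linarith
        _ ≤ Real.exp (1/8) := by
            have := Real.add_one_le_exp (1/8 : ℝ)
            linarith
    have h8 : Real.exp (-((T:ℝ)/4)) * (1 + (Real.exp 1 - 1)/16)^T ≤
        Real.exp (-((T:ℝ)/8)) := by
      calc Real.exp (-((T:ℝ)/4)) * (1 + (Real.exp 1 - 1)/16)^T
          ≤ Real.exp (-((T:ℝ)/4)) * Real.exp ((T:ℝ) * (1/8)) :=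
            mul_le_mul_of_nonneg_left hqpow (Real.exp_pos _).le
        _ = Real.exp (-((T:ℝ)/8)) := by
            rw [← Real.exp_add]; congr 1; ring
    have hT8 : Real.exp (-((T:ℝ)/8)) ≤ ε/2 := by
      have hlog : Real.log (ε/2) = - Real.log (2/ε) := by
        rw [← Real.log_inv]
        congr 1
        field_simp
      have hle8 : -((T:ℝ)/8) ≤ Real.log (ε/2) := by
        rw [hlog]; linarith
      calc Real.exp (-((T:ℝ)/8)) ≤ Real.exp (Real.log (ε/2)) := Real.exp_le_exp.mpr hle8
        _ = ε/2 := Real.exp_log (by positivity)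
    linarith
  -- trimming losses
  set l : ℕ → X → ℝ := fun t x =>
    (if h t x ≠ f x then (1:ℝ) else 0) + M t x - M (t+1) x with hldef
  have hlmeas : ∀ t, 1 ≤ t → t ≤ T → Measurable (l t) := fun t h1 h2 =>
    ((hemeas t).add (inv t h1 (by omega)).1).sub (inv (t+1) (by omega) (by omega)).1
  have hl0 : ∀ t, 1 ≤ t → t ≤ T → ∀ x, 0 ≤ l t x := by
    intro t h1 h2 x
    have hMle : M (t+1) x ≤ M t x + (if h t x ≠ f x then (1:ℝ) else 0) := by
      rw [hMrec t h1 h2 x, hNrec t h1 h2 x]; exact min_le_left _ _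
    simp only [hldef]; linarith
  have hl1 : ∀ t, 1 ≤ t → t ≤ T → ∀ x, l t x ≤ 1 := by
    intro t h1 h2 x
    obtain ⟨_, ⟨k, hk⟩, _, hM0, hMc⟩ := inv t h1 (by omega)
    have hbnn : 0 ≤ b (t+1) := by rcases hb (t+1) with h'|h' <;> simp [h']
    have he1 : (if h t x ≠ f x then (1:ℝ) else 0) ≤ 1 := by
      by_cases hx : h t x ≠ f x <;> simp [hx]
    have hge : M t x + (if h t x ≠ f x then (1:ℝ) else 0) - 1 ≤ M (t+1) x := by
      rw [hMrec t h1 h2 x, hNrec t h1 h2 x, hcrec t h1 h2]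
      refine le_min (by linarith) (by linarith [hMc x])
    simp only [hldef]; linarith
  have hlint : ∀ t, 1 ≤ t → t ≤ T → Integrable (l t) D := by
    intro t h1 h2
    refine (integrable_const (1:ℝ)).mono' (hlmeas t h1 h2).aestronglyMeasurable
      (ae_of_all _ fun x => ?_)
    rw [Real.norm_eq_abs, abs_of_nonneg (hl0 t h1 h2 x)]
    simpa using hl1 t h1 h2 x
  have hlbound : ∀ t, 1 ≤ t → t ≤ T → ∫ x, l t x ∂D ≤ ε/8 := by
    intro t h1 h2
    rcases hb (t+1) with hb0 | hb1
    · have hNmeas : Measurable (N (t+1)) := by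
        have hfun : N (t+1) = fun x => M t x + (if h t x ≠ f x then (1:ℝ) else 0) :=
          funext (hNrec t h1 h2)
        rw [hfun]; exact (inv t h1 (by omega)).1.add (hemeas t)
      have hAm : MeasurableSet {x | N (t+1) x = c t + 1} :=
        measurableSet_eq_fun hNmeas measurable_const
      have hpt : ∀ x, l t x ≤ Set.indicator {x | N (t+1) x = c t + 1} (fun _ => (1:ℝ)) x := by
        intro x
        by_cases hxA : x ∈ {x | N (t+1) x = c t + 1}
        · rw [Set.indicator_of_mem hxA]
          exact hl1 t h1 h2 x
        · rw [Set.indicator_of_notMem hxA]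
          obtain ⟨_, ⟨k, hk⟩, hNat, hM0, hMc⟩ := inv t h1 (by omega)
          obtain ⟨n, hn⟩ := hNat x
          have hMeq : M (t+1) x = min (M t x + (if h t x ≠ f x then (1:ℝ) else 0)) (c t) := by
            rw [hMrec t h1 h2 x, hNrec t h1 h2 x, hcrec t h1 h2, hb0, add_zero]
          by_cases hx : h t x ≠ f x
          · have hne : M t x + 1 ≠ c t + 1 := by
              intro hcon
              apply hxA
              show N (t+1) x = c t + 1
              rw [hNrec t h1 h2 x, if_pos hx]
              exact hcon
            have hlt : M t x < c t :=
              lt_of_le_of_ne (hMc x) (fun hcon => hne (by rw [hcon]))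
            have hltn : (n:ℝ) < (k:ℝ) := by rw [← hn, ← hk]; exact hlt
            have hnk : n + 1 ≤ k := by
              have : n < k := by exact_mod_cast hltn
              omega
            have hle' : M t x + 1 ≤ c t := by
              rw [hn, hk]; exact_mod_cast hnk
            simp only [hldef]
            rw [hMeq, if_pos hx, min_eq_left hle']
            linarith
          · simp only [hldef]
            rw [hMeq, if_neg hx, add_zero, min_eq_left (hMc x)]
            linarith
      have hind := integral_mono (hlint t h1 h2)
        ((integrable_const (1:ℝ)).indicator hAm) hpt
      rw [integral_indicator hAm, setIntegral_const, smul_eq_mul, mul_one] at hind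
      have hDA : (D {x | N (t+1) x = c t + 1}).toReal ≤ ε/8 :=
        ENNReal.toReal_le_of_le_ofReal (by positivity) (hthr t h1 h2 hb0)
      rw [measureReal_def] at hind; linarith
    · have hzero : ∀ x, l t x = 0 := by
        intro x
        obtain ⟨_, ⟨k, hk⟩, _, hM0, hMc⟩ := inv t h1 (by omega)
        have hMeq : M (t+1) x
            = min (M t x + (if h t x ≠ f x then (1:ℝ) else 0)) (c t + 1) := by
          rw [hMrec t h1 h2 x, hNrec t h1 h2 x, hcrec t h1 h2, hb1]
        have hle' : M t x + (if h t x ≠ f x then (1:ℝ) else 0) ≤ c t + 1 := by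
          have := hMc x
          by_cases hx : h t x ≠ f x <;> simp [hx] <;> linarith
        simp only [hldef]
        rw [hMeq, min_eq_left hle']
        ring
      have hfun : l t = fun _ => (0:ℝ) := funext hzero
      rw [hfun]
      simp
      positivity
  -- telescoping
  have htel : ∀ t, t ≤ T → ∀ x, (∑ s ∈ Icc 1 t, l s x)
      = (∑ s ∈ Icc 1 t, (if h s x ≠ f x then (1:ℝ) else 0)) - M (t+1) x := by
    intro t
    induction t with
    | zero => intro _ x; simp [hM1 x]
    | succ t ih =>
      intro h2 x
      rw [Finset.sum_Icc_succ_top (by omega : 1 ≤ t + 1),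
        Finset.sum_Icc_succ_top (by omega : 1 ≤ t + 1), ih (by omega) x]
      simp only [hldef]
      ring
  -- second Markov bound
  have hLmeas : Measurable (fun x => ∑ s ∈ Icc 1 T, l s x) :=
    Finset.measurable_sum _ (fun s hs => hlmeas s (Finset.mem_Icc.mp hs).1 (Finset.mem_Icc.mp hs).2)
  have hLint : Integrable (fun x => ∑ s ∈ Icc 1 T, l s x) D :=
    integrable_finset_sum _ (fun s hs => hlint s (Finset.mem_Icc.mp hs).1 (Finset.mem_Icc.mp hs).2)
  have hLsum : ∫ x, (∑ s ∈ Icc 1 T, l s x) ∂D ≤ (T:ℝ) * (ε/8) := by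
    rw [integral_finset_sum _ (fun s hs => hlint s (Finset.mem_Icc.mp hs).1 (Finset.mem_Icc.mp hs).2)]
    calc ∑ s ∈ Icc 1 T, ∫ x, l s x ∂D
        ≤ ∑ s ∈ Icc 1 T, (ε/8) :=
          Finset.sum_le_sum (fun s hs => hlbound s (Finset.mem_Icc.mp hs).1 (Finset.mem_Icc.mp hs).2)
      _ = ((Icc 1 T).card : ℝ) * (ε/8) := by rw [Finset.sum_const, nsmul_eq_mul]
      _ = (T:ℝ) * (ε/8) := by rw [Nat.card_Icc]; norm_num
  have hS2m : MeasurableSet {x | (T:ℝ)/4 ≤ ∑ s ∈ Icc 1 T, l s x} :=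
    measurableSet_le measurable_const hLmeas
  have hS2 : (D {x | (T:ℝ)/4 ≤ ∑ s ∈ Icc 1 T, l s x}).toReal ≤ ε/2 := by
    have hm := setIntegral_ge_of_const_le hS2m (measure_ne_top D _)
      (fun x hx => hx) hLint.integrableOn
    have hle := setIntegral_le_integral (s := {x | (T:ℝ)/4 ≤ ∑ s ∈ Icc 1 T, l s x}) hLint
      (ae_of_all _ fun x => Finset.sum_nonneg fun s hs =>
        hl0 s (Finset.mem_Icc.mp hs).1 (Finset.mem_Icc.mp hs).2 x)
    have hT4 : (0:ℝ) < (T:ℝ)/4 := by positivity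
    have hkey : (T:ℝ)/4 * (D {x | (T:ℝ)/4 ≤ ∑ s ∈ Icc 1 T, l s x}).toReal ≤
        (T:ℝ)/4 * (ε/2) := by
      calc (T:ℝ)/4 * (D {x | (T:ℝ)/4 ≤ ∑ s ∈ Icc 1 T, l s x}).toReal
          ≤ ∫ x in {x | (T:ℝ)/4 ≤ ∑ s ∈ Icc 1 T, l s x}, (∑ s ∈ Icc 1 T, l s x) ∂D := by
              rw [smul_eq_mul, measureReal_def] at hm; linarith [hm]
        _ ≤ ∫ x, (∑ s ∈ Icc 1 T, l s x) ∂D := hle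
        _ ≤ (T:ℝ) * (ε/8) := hLsum
        _ = (T:ℝ)/4 * (ε/2) := by ring
    exact le_of_mul_le_mul_left hkey hT4
  -- error set is contained in the union
  have hsub : {x | H x ≠ f x} ⊆
      {x | (T:ℝ)/4 ≤ M (T+1) x} ∪ {x | (T:ℝ)/4 ≤ ∑ s ∈ Icc 1 T, l s x} := by
    intro x hx
    have hx' : H x ≠ f x := hx
    have hm2 : (T:ℝ)/2 ≤ ∑ s ∈ Icc 1 T, (if h s x ≠ f x then (1:ℝ) else 0) := by
      rcases hfpm x with hf1 | hf1
      · -- f x = -1, so H x = 1 and the vote sum is positive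
        have hsum : 0 < ∑ s ∈ Icc 1 T, h s x := by
          by_contra hc
          exact hx' (by rw [hH x, if_neg hc, hf1])
        have htr : ∑ s ∈ Icc 1 T, h s x
            = -(T:ℝ) + 2 * ∑ s ∈ Icc 1 T, (if h s x ≠ f x then (1:ℝ) else 0) := by
          have hcg : ∀ s ∈ Icc 1 T, h s x
              = -1 + 2 * (if h s x ≠ f x then (1:ℝ) else 0) := by
            intro s _
            rcases hhpm s x with h'|h'
            · have hne : ¬ (h s x ≠ f x) := by rw [h', hf1]; simp
              rw [if_neg hne, h']; ring
            · have hne : h s x ≠ f x := by rw [h', hf1]; norm_num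
              rw [if_pos hne, h']; ring
          rw [Finset.sum_congr rfl hcg, Finset.sum_add_distrib, Finset.sum_const,
            ← Finset.mul_sum, Nat.card_Icc]
          simp [nsmul_eq_mul]
        rw [htr] at hsum
        linarith
      · -- f x = 1, so H x = -1 and the vote sum is nonpositive
        have hsum : ¬ (0 < ∑ s ∈ Icc 1 T, h s x) := by
          intro hc
          exact hx' (by rw [hH x, if_pos hc, hf1])
        have hsum' : ∑ s ∈ Icc 1 T, h s x ≤ 0 := le_of_not_gt hsum
        have htr : ∑ s ∈ Icc 1 T, h s x
            = (T:ℝ) - 2 * ∑ s ∈ Icc 1 T, (if h s x ≠ f x then (1:ℝ) else 0) := by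
          have hcg : ∀ s ∈ Icc 1 T, h s x
              = 1 - 2 * (if h s x ≠ f x then (1:ℝ) else 0) := by
            intro s _
            rcases hhpm s x with h'|h'
            · have hne : h s x ≠ f x := by rw [h', hf1]; norm_num
              rw [if_pos hne, h']; ring
            · have hne : ¬ (h s x ≠ f x) := by rw [h', hf1]; simp
              rw [if_neg hne, h']; ring
          rw [Finset.sum_congr rfl hcg, Finset.sum_sub_distrib, Finset.sum_const,
            ← Finset.mul_sum, Nat.card_Icc]
          simp [nsmul_eq_mul]
        rw [htr] at hsum'
        linarith
    by_cases hxS1 : (T:ℝ)/4 ≤ M (T+1) x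
    · exact Or.inl hxS1
    · right
      have hM4 : M (T+1) x < (T:ℝ)/4 := lt_of_not_ge hxS1
      have htelx := htel T le_rfl x
      show (T:ℝ)/4 ≤ ∑ s ∈ Icc 1 T, l s x
      rw [htelx]
      linarith
  -- conclusion
  have hS1' : D {x | (T:ℝ)/4 ≤ M (T+1) x} ≤ ENNReal.ofReal (ε/2) := by
    rw [← ENNReal.ofReal_toReal (measure_ne_top D _)]
    exact ENNReal.ofReal_le_ofReal hS1
  have hS2' : D {x | (T:ℝ)/4 ≤ ∑ s ∈ Icc 1 T, l s x} ≤ ENNReal.ofReal (ε/2) := by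
    rw [← ENNReal.ofReal_toReal (measure_ne_top D _)]
    exact ENNReal.ofReal_le_ofReal hS2
  calc D {x | H x ≠ f x}
      ≤ D ({x | (T:ℝ)/4 ≤ M (T+1) x} ∪ {x | (T:ℝ)/4 ≤ ∑ s ∈ Icc 1 T, l s x}) :=
        measure_mono hsub
    _ ≤ D {x | (T:ℝ)/4 ≤ M (T+1) x} + D {x | (T:ℝ)/4 ≤ ∑ s ∈ Icc 1 T, l s x} :=
        measure_union_le _ _
    _ ≤ ENNReal.ofReal (ε/2) + ENNReal.ofReal (ε/2) := add_le_add hS1' hS2'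
    _ = ENNReal.ofReal ε := by
        rw [← ENNReal.ofReal_add (by positivity) (by positivity)]
        norm_num
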